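/- arXiv:2506.05406 — 2 statements merged into one kernel-verified Lean document; each statement's English description precedes it below -/
import Mathlib

section
/- For radial u ∈ Ḣ¹(ℝ^d), d ≥ 3, and any R ≥ 0: ∫_{|x|>R} |u|^{2d/(d−2)} dx ≲ ‖u/r‖_{L²(|x|>R)}^{(2d−2)/(d−2)} · ‖∇u‖_{L²(|x|>R)}^{2/(d−2)}. -/
open MeasureTheory Filter

noncomputable section

open Set
open scoped ENNReal

local notation "dim" => Module.finrank ℝ

lemma my_lintegral_polar {E : Type*} [NormedAddCommGroup E] [NormedSpace ℝ E]
    [MeasurableSpace E] [BorelSpace E] [Nontrivial E] [FiniteDimensional ℝ E]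
    (μ : Measure E) [μ.IsAddHaarMeasure] (F : ℝ → ℝ≥0∞) (hF : Measurable F) :
    ∫⁻ x, F ‖x‖ ∂μ
      = (dim E) * μ (Metric.ball 0 1) *
          ∫⁻ y in Ioi (0:ℝ), ENNReal.ofReal (y ^ (dim E - 1)) * F y := by
  have h1 : ∫⁻ x, F ‖x‖ ∂μ = ∫⁻ x : ({(0:E)}ᶜ : Set E), F ‖x.1‖ ∂(μ.comap Subtype.val) := by
    rw [lintegral_subtype_comap (measurableSet_singleton (0:E)).compl (fun a => F ‖a‖),
      MeasureTheory.restrict_compl_singleton]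
  have hmeas : Measurable fun p : Metric.sphere (0:E) 1 × Ioi (0:ℝ) => F p.2 :=
    hF.comp (measurable_subtype_coe.comp measurable_snd)
  have h2 : ∫⁻ x : ({(0:E)}ᶜ : Set E), F ‖x.1‖ ∂(μ.comap Subtype.val)
      = ∫⁻ p : Metric.sphere (0:E) 1 × Ioi (0:ℝ), F p.2
          ∂(μ.toSphere.prod (Measure.volumeIoiPow (dim E - 1))) :=
    by simpa [homeomorphUnitSphereProd_apply_snd_coe] using
      μ.measurePreserving_homeomorphUnitSphereProd.lintegral_comp hmeas
  have h3 : ∫⁻ p : Metric.sphere (0:E) 1 × Ioi (0:ℝ), F p.2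
          ∂(μ.toSphere.prod (Measure.volumeIoiPow (dim E - 1)))
      = μ.toSphere univ * ∫⁻ y : Ioi (0:ℝ), F y ∂(Measure.volumeIoiPow (dim E - 1)) := by
    rw [lintegral_prod _ hmeas.aemeasurable]
    simp [lintegral_const, mul_comm]
  have h4 : ∫⁻ y : Ioi (0:ℝ), F y ∂(Measure.volumeIoiPow (dim E - 1))
      = ∫⁻ y in Ioi (0:ℝ), ENNReal.ofReal (y ^ (dim E - 1)) * F y := by
    rw [Measure.volumeIoiPow]
    rw [lintegral_withDensity_eq_lintegral_mul (Measure.comap Subtype.val volume)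
        ((measurable_subtype_coe.pow_const _).ennreal_ofReal)
        (g := fun y : Ioi (0:ℝ) => F y) (hF.comp measurable_subtype_coe)]
    exact lintegral_subtype_comap measurableSet_Ioi
      (fun y => ENNReal.ofReal (y ^ (dim E - 1)) * F y)
  rw [h1, h2, h3, h4, μ.toSphere_apply_univ, mul_assoc]

lemma my_transfer (d : ℕ) (hd : 3 ≤ d) (G : ℝ → ℝ) (hG : Measurable G) (hG0 : ∀ s, 0 ≤ G s)
    (R : ℝ) (hR : 0 ≤ R)
    (hint : IntegrableOn (fun x : EuclideanSpace ℝ (Fin d) => G ‖x‖) {x | R < ‖x‖}) :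
    IntegrableOn (fun s => s ^ (d - 1) * G s) (Ioi R) ∧
    ∫ x in {x : EuclideanSpace ℝ (Fin d) | R < ‖x‖}, G ‖x‖
      = (d * (volume (Metric.ball (0 : EuclideanSpace ℝ (Fin d)) 1)).toReal) *
          ∫ s in Ioi R, s ^ (d - 1) * G s := by
  set E := EuclideanSpace ℝ (Fin d)
  haveI : Nonempty (Fin d) := ⟨⟨0, by omega⟩⟩
  haveI : Nontrivial E := by
    have : (EuclideanSpace.single (⟨0, by omega⟩ : Fin d) (1:ℝ)) ≠ 0 := by
      intro h
      have := congrArg (fun v => v (⟨0, by omega⟩ : Fin d)) h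
      simpa using this
    exact nontrivial_of_ne _ _ this
  have hdim : dim E = d := finrank_euclideanSpace_fin
  set S : Set E := {x | R < ‖x‖} with hS
  have hSm : MeasurableSet S := measurableSet_lt measurable_const measurable_norm
  set F : ℝ → ℝ≥0∞ := indicator (Ioi R) (fun s => ENNReal.ofReal (G s)) with hF
  have hFm : Measurable F := (hG.ennreal_ofReal).indicator measurableSet_Ioi
  have master := my_lintegral_polar (volume : Measure E) F hFm
  rw [hdim] at master
  have hL : ∫⁻ x, F ‖x‖ ∂(volume : Measure E)
      = ∫⁻ x in S, ENNReal.ofReal (G ‖x‖) := by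
    rw [← lintegral_indicator hSm]
    refine lintegral_congr fun x => ?_
    by_cases hx : R < ‖x‖
    · rw [hF, indicator_of_mem (by exact hx), indicator_of_mem (by exact hx)]
    · rw [hF, indicator_of_notMem (by exact hx), indicator_of_notMem (by exact hx)]
  have hRr : ∫⁻ y in Ioi (0:ℝ), ENNReal.ofReal (y ^ (d - 1)) * F y
      = ∫⁻ y in Ioi R, ENNReal.ofReal (y ^ (d - 1) * G y) := by
    have : ∀ y, ENNReal.ofReal (y ^ (d - 1)) * F y
        = indicator (Ioi R) (fun y => ENNReal.ofReal (y ^ (d - 1)) * ENNReal.ofReal (G y)) y := by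
      intro y
      by_cases hy : y ∈ Ioi R
      · rw [hF, indicator_of_mem hy, indicator_of_mem hy]
      · rw [hF, indicator_of_notMem hy, indicator_of_notMem hy, mul_zero]
    rw [lintegral_congr this, lintegral_indicator measurableSet_Ioi,
      Measure.restrict_restrict measurableSet_Ioi, Ioi_inter_Ioi, max_eq_left hR]
    refine setLIntegral_congr_fun measurableSet_Ioi (fun y hy => ?_)
    rw [ENNReal.ofReal_mul (pow_nonneg (le_trans hR (le_of_lt hy)) _)]
  rw [hL, hRr] at master
  -- finiteness
  have hGm : AEStronglyMeasurable (fun x : E => G ‖x‖) (volume.restrict S) :=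
    (hG.comp measurable_norm).aestronglyMeasurable
  have hfin : ∫⁻ x in S, ENNReal.ofReal (G ‖x‖) ∂(volume : Measure E) ≠ ∞ :=
    (lintegral_ofReal_ne_top_iff_integrable hGm (ae_of_all _ fun x => hG0 _)).2 hint
  have hballpos : 0 < volume (Metric.ball (0:E) 1) := Metric.measure_ball_pos _ _ one_pos
  have hballfin : volume (Metric.ball (0:E) 1) ≠ ∞ := measure_ball_lt_top.ne
  have hc0 : ((d : ℝ≥0∞) * volume (Metric.ball (0:E) 1)) ≠ 0 := by
    apply mul_ne_zero
    · simp; omega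
    · exact hballpos.ne'
  have hcfin : ((d : ℝ≥0∞) * volume (Metric.ball (0:E) 1)) ≠ ∞ :=
    ENNReal.mul_ne_top (ENNReal.natCast_ne_top d) hballfin
  have h1fin : ∫⁻ y in Ioi R, ENNReal.ofReal (y ^ (d - 1) * G y) ≠ ∞ := by
    intro h
    rw [h, ENNReal.mul_top hc0] at master
    exact hfin master
  have h1m : AEStronglyMeasurable (fun s : ℝ => s ^ (d - 1) * G s) (volume.restrict (Ioi R)) :=
    ((measurable_id.pow_const _).mul hG).aestronglyMeasurable
  have h1nonneg : (0:ℝ → ℝ) ≤ᵐ[volume.restrict (Ioi R)] fun s => s ^ (d - 1) * G s := by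
    filter_upwards [ae_restrict_mem measurableSet_Ioi] with y hy
    exact mul_nonneg (pow_nonneg (le_trans hR (le_of_lt hy)) _) (hG0 _)
  have hInt1 : IntegrableOn (fun s => s ^ (d - 1) * G s) (Ioi R) :=
    (lintegral_ofReal_ne_top_iff_integrable h1m h1nonneg).1 h1fin
  refine ⟨hInt1, ?_⟩
  rw [integral_eq_lintegral_of_nonneg_ae (ae_of_all _ fun x => hG0 _) hGm,
    integral_eq_lintegral_of_nonneg_ae h1nonneg h1m, master, ENNReal.toReal_mul,
    ENNReal.toReal_mul, ENNReal.toReal_natCast]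

lemma my_fderiv_radial {E : Type*} [NormedAddCommGroup E] [InnerProductSpace ℝ E]
    [CompleteSpace E] (u : E → ℂ) (hu : Differentiable ℝ u)
    (hrad : ∀ x y : E, ‖x‖ = ‖y‖ → u x = u y)
    {x y : E} (h : ‖x‖ = ‖y‖) : ‖fderiv ℝ u x‖ = ‖fderiv ℝ u y‖ := by
  set Q : E ≃ₗᵢ[ℝ] E := Submodule.reflection (ℝ ∙ (x - y))ᗮ with hQdef
  have hQ : Q x = y := Submodule.reflection_sub h
  have hcomp : (u ∘ Q) = u := funext fun z => hrad _ _ (Q.norm_map z)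
  have h1 : HasFDerivAt (u ∘ Q)
      ((fderiv ℝ u (Q x)).comp Q.toLinearIsometry.toContinuousLinearMap) x :=
    (hu (Q x)).hasFDerivAt.comp x (Q.toLinearIsometry.toContinuousLinearMap).hasFDerivAt
  rw [hcomp, hQ] at h1
  rw [h1.fderiv]
  exact ContinuousLinearMap.opNorm_comp_linearIsometryEquiv (fderiv ℝ u y) Q

lemma my_strauss (d : ℕ) (hd : 3 ≤ d) (R : ℝ) (hR : 0 ≤ R)
    (φ ψ : ℝ → ℂ) (hφψ : ∀ s, HasDerivAt φ (ψ s) s) (hψm : Measurable ψ)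
    (b : ℝ → ℝ) (hbm : Measurable b) (hb0 : ∀ s, 0 ≤ b s) (hψb : ∀ s, ‖ψ s‖ ≤ b s)
    (hlim : Tendsto (fun s => ‖φ s‖ ^ 2) atTop (nhds 0))
    (Ia : IntegrableOn (fun s => s ^ (d - 1) * (‖φ s‖ ^ 2 / s ^ 2)) (Ioi R))
    (Ib : IntegrableOn (fun s => s ^ (d - 1) * b s ^ 2) (Ioi R))
    {r : ℝ} (hr : R < r) :
    r ^ (d - 2) * ‖φ r‖ ^ 2 ≤
      2 * Real.sqrt (∫ s in Ioi R, s ^ (d - 1) * (‖φ s‖ ^ 2 / s ^ 2)) *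
        Real.sqrt (∫ s in Ioi R, s ^ (d - 1) * b s ^ 2) := by
  have hr0 : 0 < r := lt_of_le_of_lt hR hr
  have hrp : 0 < r ^ (d - 2) := pow_pos hr0 _
  have hφc : Continuous φ := by
    rw [continuous_iff_continuousAt]; exact fun s => (hφψ s).continuousAt
  set a : ℝ → ℝ := fun s => Real.sqrt (s ^ (d - 1)) * (‖φ s‖ / s) with ha_def
  set B : ℝ → ℝ := fun s => Real.sqrt (s ^ (d - 1)) * b s with hB_def
  have ham : Measurable a :=
    ((continuous_pow (d-1)).measurable.sqrt).mul ((hφc.norm.measurable).div measurable_id)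
  have hBm : Measurable B := ((continuous_pow (d-1)).measurable.sqrt).mul hbm
  have ha2 : ∀ s : ℝ, 0 ≤ s → a s ^ 2 = s ^ (d - 1) * (‖φ s‖ ^ 2 / s ^ 2) := by
    intro s hs
    rw [ha_def]
    rw [mul_pow, Real.sq_sqrt (pow_nonneg hs _), div_pow]
  have hB2 : ∀ s : ℝ, 0 ≤ s → B s ^ 2 = s ^ (d - 1) * b s ^ 2 := by
    intro s hs
    rw [hB_def]; rw [mul_pow, Real.sq_sqrt (pow_nonneg hs _)]
  have ha0 : ∀ s : ℝ, 0 ≤ s → 0 ≤ a s := fun s hs =>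
    mul_nonneg (Real.sqrt_nonneg _) (div_nonneg (norm_nonneg _) hs)
  have hB0 : ∀ s : ℝ, 0 ≤ s → 0 ≤ B s := fun s hs =>
    mul_nonneg (Real.sqrt_nonneg _) (hb0 _)
  have hpow : ∀ s : ℝ, s ^ (d - 1) = s ^ (d - 2) * s := by
    intro s; rw [← pow_succ]; congr 1; omega
  have hP : ∀ s : ℝ, 0 < s → a s * B s = s ^ (d - 2) * (‖φ s‖ * b s) := by
    intro s hs
    have hsq := Real.sq_sqrt (pow_nonneg hs.le (d - 1))
    have h1 : a s * B s = s ^ (d - 1) * (‖φ s‖ / s) * b s := by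
      calc a s * B s = Real.sqrt (s ^ (d - 1)) ^ 2 * (‖φ s‖ / s) * b s := by
            simp only [ha_def, hB_def]; ring
        _ = s ^ (d - 1) * (‖φ s‖ / s) * b s := by rw [hsq]
    rw [h1, hpow s]
    field_simp
  -- the derivative of ‖φ‖²
  set h' : ℝ → ℝ := fun s => 2 * (inner ℝ (φ s) (ψ s) : ℝ) with hh'_def
  have hder : ∀ s, HasDerivAt (fun t => ‖φ t‖ ^ 2) (h' s) s := fun s => (hφψ s).norm_sq
  have hh'm : Measurable h' := (measurable_const.mul (hφc.measurable.inner hψm))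
  have hh'b : ∀ s : ℝ, |h' s| ≤ 2 * (‖φ s‖ * b s) := by
    intro s
    rw [hh'_def, abs_mul, abs_two, mul_le_mul_iff_right₀ (by norm_num : (0:ℝ) < 2)]
    exact le_trans (abs_real_inner_le_norm _ _)
      (mul_le_mul_of_nonneg_left (hψb s) (norm_nonneg _))
  have hkey : ∀ s : ℝ, r ≤ s → 2 * (‖φ s‖ * b s) ≤ 2 * (a s * B s) / r ^ (d - 2) := by
    intro s hs
    have hs0 : 0 < s := lt_of_lt_of_le hr0 hs
    rw [hP s hs0, le_div_iff₀ hrp]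
    have h1 : r ^ (d - 2) ≤ s ^ (d - 2) := pow_le_pow_left₀ hr0.le hs _
    nlinarith [norm_nonneg (φ s), hb0 s, mul_nonneg (norm_nonneg (φ s)) (hb0 s)]
  -- integrability of a*B on Ioi R
  have hg2 : IntegrableOn
      (fun s => (s ^ (d - 1) * (‖φ s‖ ^ 2 / s ^ 2) + s ^ (d - 1) * b s ^ 2) / 2) (Ioi R) :=
    (Ia.add Ib).div_const 2
  have hPInt : IntegrableOn (fun s => a s * B s) (Ioi R) := by
    refine Integrable.mono' hg2 ((ham.mul hBm).aestronglyMeasurable) ?_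
    filter_upwards [ae_restrict_mem measurableSet_Ioi] with s hs
    have hs0 : (0:ℝ) ≤ s := le_trans hR (le_of_lt hs)
    rw [Real.norm_eq_abs, abs_mul, abs_of_nonneg (ha0 s hs0), abs_of_nonneg (hB0 s hs0),
      ← ha2 s hs0, ← hB2 s hs0]
    nlinarith [sq_nonneg (a s - B s)]
  -- integrability of h' on Ioi r
  have hInt' : IntegrableOn h' (Ioi r) := by
    refine Integrable.mono'
      ((hPInt.mono_set (Ioi_subset_Ioi hr.le)).const_mul (2 / r ^ (d - 2)))
      hh'm.aestronglyMeasurable ?_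
    filter_upwards [ae_restrict_mem measurableSet_Ioi] with s hs
    rw [Real.norm_eq_abs]
    calc |h' s| ≤ 2 * (‖φ s‖ * b s) := hh'b s
      _ ≤ 2 * (a s * B s) / r ^ (d - 2) := hkey s hs.le
      _ = 2 / r ^ (d - 2) * (a s * B s) := by ring
  -- FTC
  have hFTC : ∫ s in Ioi r, h' s = 0 - ‖φ r‖ ^ 2 :=
    integral_Ioi_of_hasDerivAt_of_tendsto' (fun x _ => hder x) hInt' hlim
  have step1 : ‖φ r‖ ^ 2 ≤ ∫ s in Ioi r, |h' s| := by
    have h1 : ‖φ r‖ ^ 2 = -∫ s in Ioi r, h' s := by linarith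
    calc ‖φ r‖ ^ 2 = -∫ s in Ioi r, h' s := h1
      _ ≤ ‖∫ s in Ioi r, h' s‖ := neg_le_abs _
      _ ≤ ∫ s in Ioi r, ‖h' s‖ := norm_integral_le_integral_norm _
      _ = ∫ s in Ioi r, |h' s| := by simp [Real.norm_eq_abs]
  have step2 : ∫ s in Ioi r, |h' s| ≤ ∫ s in Ioi r, 2 / r ^ (d - 2) * (a s * B s) := by
    refine integral_mono_of_nonneg (ae_of_all _ fun s => abs_nonneg _)
      ((hPInt.mono_set (Ioi_subset_Ioi hr.le)).const_mul _) ?_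
    filter_upwards [ae_restrict_mem measurableSet_Ioi] with s hs
    calc |h' s| ≤ 2 * (‖φ s‖ * b s) := hh'b s
      _ ≤ 2 * (a s * B s) / r ^ (d - 2) := hkey s hs.le
      _ = 2 / r ^ (d - 2) * (a s * B s) := by ring
  have hPnonneg : 0 ≤ᵐ[volume.restrict (Ioi R)] fun s => a s * B s := by
    filter_upwards [ae_restrict_mem measurableSet_Ioi] with s hs
    exact mul_nonneg (ha0 s (le_trans hR hs.le)) (hB0 s (le_trans hR hs.le))
  have step3 : ∫ s in Ioi r, a s * B s ≤ ∫ s in Ioi R, a s * B s :=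
    setIntegral_mono_set hPInt hPnonneg (HasSubset.Subset.eventuallyLE (Ioi_subset_Ioi hr.le))
  -- Cauchy-Schwarz
  have haInt : IntegrableOn (fun s => a s ^ 2) (Ioi R) := by
    refine Ia.congr ?_
    filter_upwards [ae_restrict_mem measurableSet_Ioi] with s hs
    exact (ha2 s (le_trans hR hs.le)).symm
  have hBInt : IntegrableOn (fun s => B s ^ 2) (Ioi R) := by
    refine Ib.congr ?_
    filter_upwards [ae_restrict_mem measurableSet_Ioi] with s hs
    exact (hB2 s (le_trans hR hs.le)).symm
  have hamem : MemLp a 2 (volume.restrict (Ioi R)) :=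
    (memLp_two_iff_integrable_sq ham.aestronglyMeasurable).2 haInt
  have hBmem : MemLp B 2 (volume.restrict (Ioi R)) :=
    (memLp_two_iff_integrable_sq hBm.aestronglyMeasurable).2 hBInt
  have hpq : (2:ℝ).HolderConjugate 2 := Real.HolderConjugate.two_two
  have ha_ae : 0 ≤ᵐ[volume.restrict (Ioi R)] a := by
    filter_upwards [ae_restrict_mem measurableSet_Ioi] with s hs
    exact ha0 s (le_trans hR hs.le)
  have hB_ae : 0 ≤ᵐ[volume.restrict (Ioi R)] B := by
    filter_upwards [ae_restrict_mem measurableSet_Ioi] with s hs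
    exact hB0 s (le_trans hR hs.le)
  have hamem2 : MemLp a (ENNReal.ofReal 2) (volume.restrict (Ioi R)) := by
    rw [show ENNReal.ofReal 2 = 2 from by norm_num]; exact hamem
  have hBmem2 : MemLp B (ENNReal.ofReal 2) (volume.restrict (Ioi R)) := by
    rw [show ENNReal.ofReal 2 = 2 from by norm_num]; exact hBmem
  have hCS := integral_mul_le_Lp_mul_Lq_of_nonneg hpq ha_ae hB_ae hamem2 hBmem2
  have hIAnn : 0 ≤ ∫ s in Ioi R, s ^ (d - 1) * (‖φ s‖ ^ 2 / s ^ 2) := by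
    refine integral_nonneg_of_ae ?_
    filter_upwards [ae_restrict_mem measurableSet_Ioi] with s hs
    exact mul_nonneg (pow_nonneg (le_trans hR hs.le) _) (div_nonneg (sq_nonneg _) (sq_nonneg _))
  have hIBnn : 0 ≤ ∫ s in Ioi R, s ^ (d - 1) * b s ^ 2 := by
    refine integral_nonneg_of_ae ?_
    filter_upwards [ae_restrict_mem measurableSet_Ioi] with s hs
    exact mul_nonneg (pow_nonneg (le_trans hR hs.le) _) (sq_nonneg _)
  have hsq_a : ∫ s in Ioi R, a s ^ (2:ℝ) = ∫ s in Ioi R, s ^ (d - 1) * (‖φ s‖ ^ 2 / s ^ 2) := by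
    refine setIntegral_congr_fun measurableSet_Ioi fun s hs => ?_
    rw [show ((2:ℝ)) = ((2:ℕ):ℝ) by norm_num, Real.rpow_natCast]
    exact ha2 s (le_trans hR (le_of_lt hs))
  have hsq_B : ∫ s in Ioi R, B s ^ (2:ℝ) = ∫ s in Ioi R, s ^ (d - 1) * b s ^ 2 := by
    refine setIntegral_congr_fun measurableSet_Ioi fun s hs => ?_
    rw [show ((2:ℝ)) = ((2:ℕ):ℝ) by norm_num, Real.rpow_natCast]
    exact hB2 s (le_trans hR (le_of_lt hs))
  rw [hsq_a, hsq_B] at hCS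
  have step4 : ∫ s in Ioi R, a s * B s ≤
      Real.sqrt (∫ s in Ioi R, s ^ (d - 1) * (‖φ s‖ ^ 2 / s ^ 2)) *
        Real.sqrt (∫ s in Ioi R, s ^ (d - 1) * b s ^ 2) := by
    rw [Real.sqrt_eq_rpow, Real.sqrt_eq_rpow]
    exact hCS
  -- combine
  have step5 : ‖φ r‖ ^ 2 ≤ 2 / r ^ (d - 2) *
      (Real.sqrt (∫ s in Ioi R, s ^ (d - 1) * (‖φ s‖ ^ 2 / s ^ 2)) *
        Real.sqrt (∫ s in Ioi R, s ^ (d - 1) * b s ^ 2)) := by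
    calc ‖φ r‖ ^ 2 ≤ ∫ s in Ioi r, |h' s| := step1
      _ ≤ ∫ s in Ioi r, 2 / r ^ (d - 2) * (a s * B s) := step2
      _ = 2 / r ^ (d - 2) * ∫ s in Ioi r, a s * B s := integral_const_mul _ _
      _ ≤ 2 / r ^ (d - 2) * ∫ s in Ioi R, a s * B s := by
          exact mul_le_mul_of_nonneg_left step3 (by positivity)
      _ ≤ _ := mul_le_mul_of_nonneg_left step4 (by positivity)
  calc r ^ (d - 2) * ‖φ r‖ ^ 2
      ≤ r ^ (d - 2) * (2 / r ^ (d - 2) *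
        (Real.sqrt (∫ s in Ioi R, s ^ (d - 1) * (‖φ s‖ ^ 2 / s ^ 2)) *
          Real.sqrt (∫ s in Ioi R, s ^ (d - 1) * b s ^ 2))) :=
        mul_le_mul_of_nonneg_left step5 hrp.le
    _ = 2 * Real.sqrt (∫ s in Ioi R, s ^ (d - 1) * (‖φ s‖ ^ 2 / s ^ 2)) *
          Real.sqrt (∫ s in Ioi R, s ^ (d - 1) * b s ^ 2) := by
        field_simp


set_option maxHeartbeats 1000000 in
/-- Exterior interpolation estimate: for radial `u ∈ Ḣ¹(ℝ^d)`, `d ≥ 3`, `R ≥ 0`: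
`∫_{|x|>R} |u|^{2d/(d−2)} ≲ ‖u/r‖_{L²(|x|>R)}^{(2d−2)/(d−2)} ‖∇u‖_{L²(|x|>R)}^{2/(d−2)}`. -/
theorem stmt15 (d : ℕ) (hd : 3 ≤ d) :
    ∃ C : ℝ, 0 < C ∧
      ∀ (u : EuclideanSpace ℝ (Fin d) → ℂ) (R : ℝ), 0 ≤ R →
        Differentiable ℝ u →
        (∀ x y, ‖x‖ = ‖y‖ → u x = u y) →
        Tendsto u (Bornology.cobounded (EuclideanSpace ℝ (Fin d))) (nhds 0) →
        IntegrableOn (fun y => ‖fderiv ℝ u y‖ ^ 2) {y | R < ‖y‖} →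
        IntegrableOn (fun y => ‖u y‖ ^ 2 / ‖y‖ ^ 2) {y | R < ‖y‖} →
        (∫ x in {x | R < ‖x‖}, ‖u x‖ ^ (2 * (d : ℝ) / ((d : ℝ) - 2)))
          ≤ C * Real.sqrt (∫ y in {y | R < ‖y‖}, ‖u y‖ ^ 2 / ‖y‖ ^ 2)
                ^ ((2 * (d : ℝ) - 2) / ((d : ℝ) - 2))
              * Real.sqrt (∫ y in {y | R < ‖y‖}, ‖fderiv ℝ u y‖ ^ 2)
                ^ ((2 : ℝ) / ((d : ℝ) - 2)) := by
  classical
  set E := EuclideanSpace ℝ (Fin d) with hE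
  -- basic numerology
  have hd2R : (0:ℝ) < (d:ℝ) - 2 := by
    have : (3:ℝ) ≤ (d:ℝ) := by exact_mod_cast hd
    linarith
  set t : ℝ := 2 / ((d:ℝ) - 2) with ht_def
  have ht0 : 0 < t := div_pos two_pos hd2R
  set c : ℝ := d * (volume (Metric.ball (0 : E) 1)).toReal with hc_def
  have hballpos : 0 < (volume (Metric.ball (0 : E) 1)).toReal :=
    ENNReal.toReal_pos (Metric.measure_ball_pos _ _ one_pos).ne' measure_ball_lt_top.ne
  have hc0 : 0 < c := by
    have : (0:ℝ) < d := by positivity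
    exact mul_pos this hballpos
  refine ⟨(2 / c) ^ t, Real.rpow_pos_of_pos (by positivity) _, ?_⟩
  intro u R hR hdiff hrad hulim hIb hIa
  set S : Set E := {x | R < ‖x‖} with hS
  -- the unit vector and the profile
  have hdpos : 0 < d := by omega
  set e : E := EuclideanSpace.single (⟨0, hdpos⟩ : Fin d) (1:ℝ) with he_def
  have he : ‖e‖ = 1 := by
    rw [he_def, EuclideanSpace.norm_single]; norm_num
  have hsm : ∀ s : ℝ, 0 ≤ s → ‖s • e‖ = s := by
    intro s hs
    rw [norm_smul, he, Real.norm_eq_abs, abs_of_nonneg hs, mul_one]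
  set φ : ℝ → ℂ := fun s => u (s • e) with hφ_def
  set ψ : ℝ → ℂ := fun s => fderiv ℝ u (s • e) e with hψ_def
  set b : ℝ → ℝ := fun s => ‖fderiv ℝ u (s • e)‖ with hb_def
  have hφx : ∀ x : E, u x = φ ‖x‖ := fun x =>
    hrad x (‖x‖ • e) (hsm ‖x‖ (norm_nonneg x)).symm
  have hsmul_cont : Continuous fun s : ℝ => s • e := continuous_id.smul continuous_const
  have hφc : Continuous φ := hdiff.continuous.comp hsmul_cont
  have hφψ : ∀ s, HasDerivAt φ (ψ s) s := by
    intro s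
    have hline : HasDerivAt (fun t : ℝ => t • e) e s := by
      simpa using (hasDerivAt_id s).smul_const e
    exact (hdiff (s • e)).hasFDerivAt.comp_hasDerivAt s hline
  have hψm : Measurable ψ :=
    (measurable_fderiv_apply_const ℝ u e).comp hsmul_cont.measurable
  have hbm : Measurable b :=
    (measurable_fderiv ℝ u).norm.comp hsmul_cont.measurable
  have hb0 : ∀ s, 0 ≤ b s := fun s => norm_nonneg _
  have hψb : ∀ s, ‖ψ s‖ ≤ b s := by
    intro s
    have := (fderiv ℝ u (s • e)).le_opNorm e
    rwa [he, mul_one] at this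
  -- limit at infinity
  have hφlim : Tendsto (fun s => ‖φ s‖ ^ 2) atTop (nhds 0) := by
    have h1 : Tendsto (fun s : ℝ => s • e) atTop (Bornology.cobounded E) := by
      rw [← comap_norm_atTop]
      rw [tendsto_comap_iff]
      have : (fun s : ℝ => ‖s • e‖) =ᶠ[atTop] fun s => s := by
        filter_upwards [eventually_ge_atTop (0:ℝ)] with s hs
        exact hsm s hs
      exact Tendsto.congr' this.symm tendsto_id
    have h2 : Tendsto φ atTop (nhds 0) := hulim.comp h1
    have h3 := (h2.norm).pow 2
    simpa using h3
  -- radial transfer for |u|²/r²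
  set G₁ : ℝ → ℝ := fun s => ‖φ s‖ ^ 2 / s ^ 2 with hG₁_def
  have hG₁m : Measurable G₁ :=
    ((hφc.norm.measurable).pow_const 2).div ((measurable_id.pow_const 2))
  have hG₁0 : ∀ s, 0 ≤ G₁ s := fun s => div_nonneg (sq_nonneg _) (sq_nonneg _)
  have hIaG : IntegrableOn (fun x : E => G₁ ‖x‖) S := by
    refine hIa.congr ?_
    refine ae_of_all _ fun x => ?_
    rw [hG₁_def]; dsimp only; rw [← hφx x]
  obtain ⟨Ia1, eqA⟩ := my_transfer d hd G₁ hG₁m hG₁0 R hR hIaG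
  -- radial transfer for |∇u|²
  set G₂ : ℝ → ℝ := fun s => b s ^ 2 with hG₂_def
  have hG₂m : Measurable G₂ := hbm.pow_const 2
  have hG₂0 : ∀ s, 0 ≤ G₂ s := fun s => sq_nonneg _
  have hG₂x : ∀ x : E, G₂ ‖x‖ = ‖fderiv ℝ u x‖ ^ 2 := by
    intro x
    have h := my_fderiv_radial u hdiff hrad (hsm ‖x‖ (norm_nonneg x))
    simp only [hG₂_def, hb_def]
    rw [h]
  have hIbG : IntegrableOn (fun x : E => G₂ ‖x‖) S := by
    refine hIb.congr ?_
    exact ae_of_all _ fun x => (hG₂x x).symm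
  obtain ⟨Ib1, eqB⟩ := my_transfer d hd G₂ hG₂m hG₂0 R hR hIbG
  -- notation for the main quantities
  set IAd : ℝ := ∫ y in S, ‖u y‖ ^ 2 / ‖y‖ ^ 2 with hIAd
  set IBd : ℝ := ∫ y in S, ‖fderiv ℝ u y‖ ^ 2 with hIBd
  set A : ℝ := Real.sqrt IAd with hA_def
  set Bq : ℝ := Real.sqrt IBd with hB_def2
  have hIAd0 : 0 ≤ IAd := integral_nonneg fun y => div_nonneg (sq_nonneg _) (sq_nonneg _)
  have hIBd0 : 0 ≤ IBd := integral_nonneg fun y => sq_nonneg _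
  have hA0 : 0 ≤ A := Real.sqrt_nonneg _
  have hB0' : 0 ≤ Bq := Real.sqrt_nonneg _
  have hA2 : A ^ 2 = IAd := Real.sq_sqrt hIAd0
  have hB2 : Bq ^ 2 = IBd := Real.sq_sqrt hIBd0
  -- identify dD and 1D integrals
  have eqA' : IAd = c * ∫ s in Ioi R, s ^ (d - 1) * G₁ s := by
    rw [hIAd, ← eqA]
    refine integral_congr_ae (ae_of_all _ fun x => ?_)
    rw [hG₁_def]; dsimp only; rw [← hφx x]
  have eqB' : IBd = c * ∫ s in Ioi R, s ^ (d - 1) * G₂ s := by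
    rw [hIBd, ← eqB]
    exact integral_congr_ae (ae_of_all _ fun x => (hG₂x x).symm)
  -- 1D integrals as values
  set JA : ℝ := ∫ s in Ioi R, s ^ (d - 1) * G₁ s with hJA
  set JB : ℝ := ∫ s in Ioi R, s ^ (d - 1) * G₂ s with hJB
  have hJA_val : JA = IAd / c := by rw [eqA']; field_simp
  have hJB_val : JB = IBd / c := by rw [eqB']; field_simp
  -- Strauss pointwise bound
  set K : ℝ := 2 * (A * Bq) / c with hK_def
  have hK0 : 0 ≤ K := div_nonneg (mul_nonneg (by norm_num) (mul_nonneg hA0 hB0')) hc0.le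
  have hstrauss : ∀ x : E, x ∈ S → ‖x‖ ^ (d - 2) * ‖u x‖ ^ 2 ≤ K := by
    intro x hx
    have hxR : R < ‖x‖ := hx
    have h1 : ‖x‖ ^ (d - 2) * ‖φ ‖x‖‖ ^ 2 ≤ 2 * Real.sqrt JA * Real.sqrt JB :=
      my_strauss d hd R hR φ ψ hφψ hψm b hbm hb0 hψb hφlim Ia1 Ib1 hxR
    have h2 : Real.sqrt JA * Real.sqrt JB = A * Bq / c := by
      rw [hJA_val, hJB_val, Real.sqrt_div hIAd0, Real.sqrt_div hIBd0, div_mul_div_comm,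
        Real.mul_self_sqrt hc0.le]
    calc ‖x‖ ^ (d - 2) * ‖u x‖ ^ 2 = ‖x‖ ^ (d - 2) * ‖φ ‖x‖‖ ^ 2 := by rw [hφx x]
      _ ≤ 2 * Real.sqrt JA * Real.sqrt JB := h1
      _ = K := by rw [mul_assoc, h2, hK_def]; ring
  -- pointwise interpolation bound
  have hp_ne : 2 * (d:ℝ) / ((d:ℝ) - 2) ≠ 0 :=
    ne_of_gt (div_pos (by positivity) hd2R)
  have hpt : ∀ x : E, x ∈ S →
      ‖u x‖ ^ (2 * (d:ℝ) / ((d:ℝ) - 2)) ≤ K ^ t * (‖u x‖ ^ 2 / ‖x‖ ^ 2) := by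
    intro x hx
    have hm0 : (0:ℝ) < ‖x‖ := lt_of_le_of_lt hR hx
    have hn0 : (0:ℝ) ≤ ‖u x‖ := norm_nonneg _
    have hp_eq : 2 * (d:ℝ) / ((d:ℝ) - 2) = 2 + 2 * t := by
      rw [ht_def]; field_simp; ring
    rcases eq_or_lt_of_le hn0 with h0 | h0
    · rw [← h0, Real.zero_rpow hp_ne]
      exact mul_nonneg (Real.rpow_nonneg hK0 _) (by positivity)
    · have key := hstrauss x hx
      have h1 : (‖x‖ ^ (d - 2) * ‖u x‖ ^ 2) ^ t ≤ K ^ t :=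
        Real.rpow_le_rpow (by positivity) key ht0.le
      have hcast : ((d - 2 : ℕ) : ℝ) = (d:ℝ) - 2 := by
        rw [Nat.cast_sub (by omega)]; norm_num
      have hdt : ((d:ℝ) - 2) * t = 2 := by
        rw [ht_def]; field_simp
      have h2 : ((‖x‖ ^ (d - 2) * ‖u x‖ ^ 2 : ℝ)) ^ t = ‖x‖ ^ 2 * ‖u x‖ ^ (2 * t) := by
        rw [Real.mul_rpow (by positivity) (by positivity),
          ← Real.rpow_natCast ‖x‖ (d - 2), ← Real.rpow_natCast ‖u x‖ 2,
          ← Real.rpow_mul hm0.le, ← Real.rpow_mul hn0, hcast, hdt]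
        rw [Real.rpow_two]
        norm_num
      have h3 : ‖x‖ ^ 2 * ‖u x‖ ^ (2 * t) ≤ K ^ t := h2 ▸ h1
      have h5 : ‖u x‖ ^ (2 * t) ≤ K ^ t / ‖x‖ ^ 2 := by
        rwa [le_div_iff₀' (by positivity)]
      have h4 : ‖u x‖ ^ (2 * (d:ℝ) / ((d:ℝ) - 2)) = ‖u x‖ ^ 2 * ‖u x‖ ^ (2 * t) := by
        rw [hp_eq, Real.rpow_add h0, Real.rpow_two]
      rw [h4]
      calc ‖u x‖ ^ 2 * ‖u x‖ ^ (2 * t) ≤ ‖u x‖ ^ 2 * (K ^ t / ‖x‖ ^ 2) :=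
            mul_le_mul_of_nonneg_left h5 (by positivity)
        _ = K ^ t * (‖u x‖ ^ 2 / ‖x‖ ^ 2) := by ring
  -- integrate
  have hSm : MeasurableSet S := measurableSet_lt measurable_const measurable_norm
  have hfinal1 : (∫ x in S, ‖u x‖ ^ (2 * (d:ℝ) / ((d:ℝ) - 2)))
      ≤ ∫ x in S, K ^ t * (‖u x‖ ^ 2 / ‖x‖ ^ 2) := by
    refine integral_mono_of_nonneg
      (ae_of_all _ fun x => Real.rpow_nonneg (norm_nonneg _) _) (hIa.const_mul _) ?_
    filter_upwards [ae_restrict_mem hSm] with x hx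
    exact hpt x hx
  have hfinal2 : ∫ x in S, K ^ t * (‖u x‖ ^ 2 / ‖x‖ ^ 2) = K ^ t * IAd :=
    integral_const_mul _ _
  -- final algebra
  have e1 : K = (2 / c) * (A * Bq) := by rw [hK_def]; ring
  have e2 : K ^ t = (2 / c) ^ t * (A ^ t * Bq ^ t) := by
    rw [e1, Real.mul_rpow (div_nonneg (by norm_num) hc0.le) (mul_nonneg hA0 hB0'),
      Real.mul_rpow hA0 hB0']
  have e3 : (2 * (d:ℝ) - 2) / ((d:ℝ) - 2) = 2 + t := by
    rw [ht_def]; field_simp; ring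
  have e4 : A ^ ((2 * (d:ℝ) - 2) / ((d:ℝ) - 2)) = A ^ (2:ℝ) * A ^ t := by
    rw [e3, Real.rpow_add' hA0 (by intro h; nlinarith [ht0])]
  have e5 : A ^ (2:ℝ) = IAd := by rw [Real.rpow_two, hA2]
  have e6 : K ^ t * IAd
      = (2 / c) ^ t * A ^ ((2 * (d:ℝ) - 2) / ((d:ℝ) - 2)) * Bq ^ ((2:ℝ) / ((d:ℝ) - 2)) := by
    rw [e2, e4, e5, ← ht_def]
    ring
  calc (∫ x in S, ‖u x‖ ^ (2 * (d:ℝ) / ((d:ℝ) - 2)))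
      ≤ K ^ t * IAd := le_trans hfinal1 (le_of_eq hfinal2)
    _ = (2 / c) ^ t * A ^ ((2 * (d:ℝ) - 2) / ((d:ℝ) - 2)) * Bq ^ ((2:ℝ) / ((d:ℝ) - 2)) := e6

end
end

section
/- Let μ > 0 and suppose real-valued functions λ₊, λ₋ of τ satisfy the ODEs ∂_τλ₊ = μλ₊ + O(λ₁²) and ∂_τλ₋ = −μλ₋ + O(λ₁²) with λ₁ = (λ₊+λ₋)/2, where initially λ₊(0) ≥ |λ₁(0)|/2 > 0, λ₋(0) ≥ 0, and |λ₁(0)| = R̃ is small. Then as long as |λ₁(τ)| ≤ 2R̃e^{μτ} remains small, one has |λ₊(τ) − e^{μτ}λ₊(0)| ≲ R̃²e^{2μτ} and |λ₋(τ) − e^{−μτ}λ₋(0)| ≲ R̃²e^{2μτ}; consequently |λ₁(τ)| ∼ R̃e^{μτ}. -/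
open Real

noncomputable section

lemma expDeriv (a s : ℝ) : HasDerivAt (fun x : ℝ => Real.exp (a * x)) (a * Real.exp (a * s)) s := by
  have h := (Real.hasDerivAt_exp (a * s)).comp s ((hasDerivAt_id s).const_mul a)
  simpa [mul_comm, Function.comp_def] using h

lemma key_est (a B : ℝ) (ha : 0 < a) (f : ℝ → ℝ) (hf : Differentiable ℝ f)
    (τ : ℝ) (hτ : 0 ≤ τ)
    (hb : ∀ s ∈ Set.Icc (0:ℝ) τ, |deriv f s| ≤ B * Real.exp (a * s)) :
    |f τ - f 0| ≤ B / a * (Real.exp (a * τ) - 1) := by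
  have hmem0 : (0:ℝ) ∈ Set.Icc (0:ℝ) τ := ⟨le_refl _, hτ⟩
  have hmemτ : τ ∈ Set.Icc (0:ℝ) τ := ⟨hτ, le_refl _⟩
  have hconv : Convex ℝ (Set.Icc (0:ℝ) τ) := convex_Icc _ _
  have hEderiv : ∀ s : ℝ, HasDerivAt (fun x : ℝ => B / a * Real.exp (a * x))
      (B * Real.exp (a * s)) s := by
    intro s
    have h := (expDeriv a s).const_mul (B / a)
    have : B / a * (a * Real.exp (a * s)) = B * Real.exp (a * s) := by
      field_simp
    rwa [this] at h
  have h1 : f τ - f 0 ≤ B / a * (Real.exp (a * τ) - 1) := by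
    set g : ℝ → ℝ := fun s => B / a * Real.exp (a * s) - f s with hg
    have hgd : ∀ s, HasDerivAt g (B * Real.exp (a * s) - deriv f s) s := fun s =>
      (hEderiv s).sub (hf s).hasDerivAt
    have hmono : MonotoneOn g (Set.Icc (0:ℝ) τ) := by
      apply monotoneOn_of_deriv_nonneg hconv
      · exact fun s _ => ((hgd s).continuousAt).continuousWithinAt
      · exact fun s _ => ((hgd s).differentiableAt).differentiableWithinAt
      · intro x hx
        rw [interior_Icc] at hx
        rw [(hgd x).deriv]
        linarith [(abs_le.mp (hb x (Set.Ioo_subset_Icc_self hx))).2]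
    have := hmono hmem0 hmemτ hτ
    simp only [hg, mul_zero, Real.exp_zero] at this
    nlinarith [this]
  have h2 : f 0 - f τ ≤ B / a * (Real.exp (a * τ) - 1) := by
    set g : ℝ → ℝ := fun s => B / a * Real.exp (a * s) + f s with hg
    have hgd : ∀ s, HasDerivAt g (B * Real.exp (a * s) + deriv f s) s := fun s =>
      (hEderiv s).add (hf s).hasDerivAt
    have hmono : MonotoneOn g (Set.Icc (0:ℝ) τ) := by
      apply monotoneOn_of_deriv_nonneg hconv
      · exact fun s _ => ((hgd s).continuousAt).continuousWithinAt
      · exact fun s _ => ((hgd s).differentiableAt).differentiableWithinAt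
      · intro x hx
        rw [interior_Icc] at hx
        rw [(hgd x).deriv]
        linarith [(abs_le.mp (hb x (Set.Ioo_subset_Icc_self hx))).1]
    have := hmono hmem0 hmemτ hτ
    simp only [hg, mul_zero, Real.exp_zero] at this
    nlinarith [this]
  rw [abs_sub_le_iff]
  exact ⟨h1, h2⟩

set_option maxHeartbeats 1000000 in
/-- Hyperbolic growth estimate for the eigenmode coefficients near the ground
state: if `∂_τλ₊ = μλ₊ + O(λ₁²)`, `∂_τλ₋ = −μλ₋ + O(λ₁²)` with
`λ₁ = (λ₊+λ₋)/2`, `λ₊(0) ≥ |λ₁(0)|/2 > 0`, `λ₋(0) ≥ 0`, and `R̃ = |λ₁(0)|` is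
small, then as long as `|λ₁(τ)| ≤ 2R̃e^{μτ}` remains small one has
`|λ₊(τ) − e^{μτ}λ₊(0)| ≲ R̃²e^{2μτ}`, `|λ₋(τ) − e^{−μτ}λ₋(0)| ≲ R̃²e^{2μτ}`,
and consequently `|λ₁(τ)| ∼ R̃e^{μτ}`. -/
theorem stmt19 (μ C₀ : ℝ) (hμ : 0 < μ) (hC₀ : 0 < C₀) :
    ∃ ε₀ C₁ c₂ C₃ : ℝ, 0 < ε₀ ∧ 0 < C₁ ∧ 0 < c₂ ∧ 0 < C₃ ∧
      ∀ (lp lm : ℝ → ℝ), Differentiable ℝ lp → Differentiable ℝ lm →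
        (∀ τ : ℝ, |deriv lp τ - μ * lp τ| ≤ C₀ * ((lp τ + lm τ) / 2) ^ 2) →
        (∀ τ : ℝ, |deriv lm τ + μ * lm τ| ≤ C₀ * ((lp τ + lm τ) / 2) ^ 2) →
        ∀ Rt : ℝ, Rt = |(lp 0 + lm 0) / 2| →
          |(lp 0 + lm 0) / 2| / 2 ≤ lp 0 →
          0 < |(lp 0 + lm 0) / 2| →
          0 ≤ lm 0 →
          Rt ≤ ε₀ →
          ∀ T : ℝ, 0 ≤ T →
            (∀ τ ∈ Set.Icc (0 : ℝ) T,
              |(lp τ + lm τ) / 2| ≤ 2 * Rt * Real.exp (μ * τ) ∧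
              2 * Rt * Real.exp (μ * τ) ≤ ε₀) →
            ∀ τ ∈ Set.Icc (0 : ℝ) T,
              |lp τ - Real.exp (μ * τ) * lp 0| ≤ C₁ * Rt ^ 2 * Real.exp (2 * μ * τ) ∧
              |lm τ - Real.exp (-(μ * τ)) * lm 0| ≤ C₁ * Rt ^ 2 * Real.exp (2 * μ * τ) ∧
              c₂ * Rt * Real.exp (μ * τ) ≤ |(lp τ + lm τ) / 2| ∧
              |(lp τ + lm τ) / 2| ≤ C₃ * Rt * Real.exp (μ * τ) := by
  set C₁ : ℝ := 4 * C₀ / μ with hC₁def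
  have hC₁ : 0 < C₁ := by positivity
  refine ⟨1 / (4 * C₁), C₁, 1/8, 2, by positivity, hC₁, by norm_num, by norm_num, ?_⟩
  intro lp lm hlp hlm hp hm Rt hRtdef hlp0 hpos hlm0 hRtε T hT hboot τ hτmem
  obtain ⟨hτ0, hτT⟩ := hτmem
  have hRt : 0 < Rt := hRtdef ▸ hpos
  -- pointwise bound on λ₁² for s ∈ [0, τ]
  have hsq : ∀ s ∈ Set.Icc (0:ℝ) τ,
      C₀ * ((lp s + lm s) / 2) ^ 2 ≤ 4 * C₀ * Rt ^ 2 * Real.exp (μ * s) ^ 2 := by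
    intro s hs
    have hsT : s ∈ Set.Icc (0:ℝ) T := ⟨hs.1, hs.2.trans hτT⟩
    have h1 := (hboot s hsT).1
    have h2 : ((lp s + lm s) / 2) ^ 2 ≤ (2 * Rt * Real.exp (μ * s)) ^ 2 := by
      rw [← sq_abs]
      exact pow_le_pow_left₀ (abs_nonneg _) h1 2
    nlinarith [Real.exp_pos (μ * s), sq_nonneg (Real.exp (μ * s))]
  -- Part A : the lp estimate
  have hEτ : (0:ℝ) < Real.exp (μ * τ) := Real.exp_pos _
  have hA : |lp τ - Real.exp (μ * τ) * lp 0| ≤ C₁ * Rt ^ 2 * Real.exp (2 * μ * τ) := by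
    set F : ℝ → ℝ := fun s => Real.exp ((-μ) * s) * lp s with hF
    have hFd : ∀ s, HasDerivAt F
        ((-μ) * Real.exp ((-μ) * s) * lp s + Real.exp ((-μ) * s) * deriv lp s) s :=
      fun s => (expDeriv (-μ) s).mul (hlp s).hasDerivAt
    have hFdiff : Differentiable ℝ F := fun s => (hFd s).differentiableAt
    have hb : ∀ s ∈ Set.Icc (0:ℝ) τ, |deriv F s| ≤ (4 * C₀ * Rt ^ 2) * Real.exp (μ * s) := by
      intro s hs
      rw [(hFd s).deriv]
      have heq : (-μ) * Real.exp ((-μ) * s) * lp s + Real.exp ((-μ) * s) * deriv lp s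
          = Real.exp ((-μ) * s) * (deriv lp s - μ * lp s) := by ring
      rw [heq, abs_mul, abs_of_pos (Real.exp_pos _)]
      have h1 : Real.exp ((-μ) * s) * |deriv lp s - μ * lp s|
          ≤ Real.exp ((-μ) * s) * (4 * C₀ * Rt ^ 2 * Real.exp (μ * s) ^ 2) := by
        apply mul_le_mul_of_nonneg_left _ (Real.exp_pos _).le
        exact (hp s).trans (hsq s hs)
      refine h1.trans (le_of_eq ?_)
      rw [neg_mul, Real.exp_neg]
      have := (Real.exp_pos (μ * s)).ne'
      field_simp
    have hkey := key_est μ (4 * C₀ * Rt ^ 2) hμ F hFdiff τ hτ0 hb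
    have hF0 : F 0 = lp 0 := by simp [hF]
    have hFτ : F τ = Real.exp ((-μ) * τ) * lp τ := rfl
    have hid : lp τ - Real.exp (μ * τ) * lp 0 = Real.exp (μ * τ) * (F τ - F 0) := by
      rw [hFτ, hF0, neg_mul, Real.exp_neg]
      field_simp
    rw [hid, abs_mul, abs_of_pos hEτ]
    calc Real.exp (μ * τ) * |F τ - F 0|
        ≤ Real.exp (μ * τ) * (4 * C₀ * Rt ^ 2 / μ * (Real.exp (μ * τ) - 1)) :=
          mul_le_mul_of_nonneg_left hkey hEτ.le
      _ ≤ C₁ * Rt ^ 2 * Real.exp (2 * μ * τ) := by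
          have h2 : Real.exp (2 * μ * τ) = Real.exp (μ * τ) * Real.exp (μ * τ) := by
            rw [← Real.exp_add]; ring_nf
          rw [h2, hC₁def]
          have hpos' : (0:ℝ) ≤ 4 * C₀ / μ * Rt ^ 2 * Real.exp (μ * τ) := by positivity
          have heq : Real.exp (μ * τ) * (4 * C₀ * Rt ^ 2 / μ * (Real.exp (μ * τ) - 1))
              = 4 * C₀ / μ * Rt ^ 2 * (Real.exp (μ * τ) * Real.exp (μ * τ))
                - 4 * C₀ / μ * Rt ^ 2 * Real.exp (μ * τ) := by ring
          linarith [heq]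
  -- Part B : the lm estimate
  have hB : |lm τ - Real.exp (-(μ * τ)) * lm 0| ≤ C₁ * Rt ^ 2 * Real.exp (2 * μ * τ) := by
    set G : ℝ → ℝ := fun s => Real.exp (μ * s) * lm s with hG
    have hGd : ∀ s, HasDerivAt G
        (μ * Real.exp (μ * s) * lm s + Real.exp (μ * s) * deriv lm s) s :=
      fun s => (expDeriv μ s).mul (hlm s).hasDerivAt
    have hGdiff : Differentiable ℝ G := fun s => (hGd s).differentiableAt
    have hb : ∀ s ∈ Set.Icc (0:ℝ) τ, |deriv G s| ≤ (4 * C₀ * Rt ^ 2) * Real.exp (3 * μ * s) := by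
      intro s hs
      rw [(hGd s).deriv]
      have heq : μ * Real.exp (μ * s) * lm s + Real.exp (μ * s) * deriv lm s
          = Real.exp (μ * s) * (deriv lm s + μ * lm s) := by ring
      rw [heq, abs_mul, abs_of_pos (Real.exp_pos _)]
      have h1 : Real.exp (μ * s) * |deriv lm s + μ * lm s|
          ≤ Real.exp (μ * s) * (4 * C₀ * Rt ^ 2 * Real.exp (μ * s) ^ 2) := by
        apply mul_le_mul_of_nonneg_left _ (Real.exp_pos _).le
        exact (hm s).trans (hsq s hs)
      refine h1.trans (le_of_eq ?_)
      have h3 : Real.exp (3 * μ * s) = Real.exp (μ * s) * Real.exp (μ * s) ^ 2 := by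
        rw [sq, ← Real.exp_add, ← Real.exp_add]; ring_nf
      rw [h3]; ring
    have hkey := key_est (3 * μ) (4 * C₀ * Rt ^ 2) (by positivity) G hGdiff τ hτ0 hb
    have hG0 : G 0 = lm 0 := by simp [hG]
    have hGτ : G τ = Real.exp (μ * τ) * lm τ := rfl
    have hid : lm τ - Real.exp (-(μ * τ)) * lm 0 = Real.exp (-(μ * τ)) * (G τ - G 0) := by
      rw [hGτ, hG0, Real.exp_neg]
      field_simp
    rw [hid, abs_mul, abs_of_pos (Real.exp_pos _)]
    have hstep : Real.exp (-(μ * τ)) * |G τ - G 0|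
        ≤ Real.exp (-(μ * τ)) * (4 * C₀ * Rt ^ 2 / (3 * μ) * (Real.exp (3 * μ * τ) - 1)) :=
      mul_le_mul_of_nonneg_left hkey (Real.exp_pos _).le
    refine hstep.trans ?_
    have h3 : Real.exp (-(μ * τ)) * Real.exp (3 * μ * τ) = Real.exp (2 * μ * τ) := by
      rw [← Real.exp_add]; ring_nf
    have hE3 : (0:ℝ) < Real.exp (3 * μ * τ) := Real.exp_pos _
    have hEn : (0:ℝ) < Real.exp (-(μ * τ)) := Real.exp_pos _
    have hC : 4 * C₀ * Rt ^ 2 / (3 * μ) ≤ C₁ * Rt ^ 2 := by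
      rw [hC₁def]
      rw [div_le_iff₀ (by positivity)]
      have : C₁ * Rt ^ 2 * (3 * μ) = 3 * (4 * C₀ * Rt ^ 2) := by
        rw [hC₁def]; field_simp
      nlinarith [sq_nonneg Rt]
    have hconst : (0:ℝ) ≤ 4 * C₀ * Rt ^ 2 / (3 * μ) := by positivity
    calc Real.exp (-(μ * τ)) * (4 * C₀ * Rt ^ 2 / (3 * μ) * (Real.exp (3 * μ * τ) - 1))
        ≤ Real.exp (-(μ * τ)) * (4 * C₀ * Rt ^ 2 / (3 * μ) * Real.exp (3 * μ * τ)) := by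
          apply mul_le_mul_of_nonneg_left _ hEn.le
          apply mul_le_mul_of_nonneg_left _ hconst
          linarith
      _ = 4 * C₀ * Rt ^ 2 / (3 * μ) * Real.exp (2 * μ * τ) := by
          rw [← h3]; ring
      _ ≤ C₁ * Rt ^ 2 * Real.exp (2 * μ * τ) :=
          mul_le_mul_of_nonneg_right hC (Real.exp_pos _).le
  -- Part C : lower and upper bounds on λ₁
  refine ⟨hA, hB, ?_, ?_⟩
  · -- lower bound
    have hε := (hboot τ ⟨hτ0, hτT⟩).2
    have hRtE' : (Rt * Real.exp (μ * τ)) * (8 * C₁) ≤ 1 := by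
      rw [le_div_iff₀ (by positivity)] at hε
      nlinarith
    have hlpτ : Real.exp (μ * τ) * lp 0 - C₁ * Rt ^ 2 * Real.exp (2 * μ * τ) ≤ lp τ := by
      have := (abs_le.mp hA).1; linarith
    have hlmτ : Real.exp (-(μ * τ)) * lm 0 - C₁ * Rt ^ 2 * Real.exp (2 * μ * τ) ≤ lm τ := by
      have := (abs_le.mp hB).1; linarith
    have hlp0' : Rt / 2 ≤ lp 0 := by rw [hRtdef]; exact hlp0
    have hlm0' : (0:ℝ) ≤ Real.exp (-(μ * τ)) * lm 0 := by positivity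
    have hRE : C₁ * Rt ^ 2 * Real.exp (2 * μ * τ) ≤ Rt * Real.exp (μ * τ) / 8 := by
      have h2 : Real.exp (2 * μ * τ) = Real.exp (μ * τ) * Real.exp (μ * τ) := by
        rw [← Real.exp_add]; ring_nf
      rw [h2]
      have : C₁ * Rt ^ 2 * (Real.exp (μ * τ) * Real.exp (μ * τ))
          = C₁ * (Rt * Real.exp (μ * τ)) * (Rt * Real.exp (μ * τ)) := by ring
      rw [this]
      have hx : (0:ℝ) ≤ Rt * Real.exp (μ * τ) := by positivity
      nlinarith [mul_le_mul_of_nonneg_right hRtE' hx, hx]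
    have hlow : Rt * Real.exp (μ * τ) / 8 ≤ (lp τ + lm τ) / 2 := by
      have h1 : Rt / 2 * Real.exp (μ * τ) ≤ Real.exp (μ * τ) * lp 0 := by
        nlinarith [hEτ]
      linarith
    calc 1/8 * Rt * Real.exp (μ * τ) = Rt * Real.exp (μ * τ) / 8 := by ring
      _ ≤ (lp τ + lm τ) / 2 := hlow
      _ ≤ |(lp τ + lm τ) / 2| := le_abs_self _
  · have := (hboot τ ⟨hτ0, hτT⟩).1
    linarith


end
end
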